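/- (i) The uniformized chain of the OEF CTMC is irreducible: for all states x, y ∈ S there exists k ∈ ℕ such that (Pᵏ)(x,y) > 0. (ii) The OEF CTMC admits a stationary distribution: there exists Π : S → ℝ with Π(x) ≥ 0 for all x, ∑_{x ∈ S} Π(x) = 1, and ∑_{x ∈ S} Π(x) · Q(x,y) = 0 for all y ∈ S. -/

import Mathlib

open scoped BigOperators

noncomputable def Qoff (n M : ℕ) (lam : Fin n → ℝ) (mu : ℝ)
    (x y : Fin n → Fin (M+1)) : ℝ :=
  (∑ j : Fin n,
      if (y j : ℕ) = (x j : ℕ) + 1 ∧ (∀ k, k ≠ j → y k = x k) then lam j else 0)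
  + (if y = (fun _ => 0) ∧ x ≠ (fun _ => 0) then mu else 0)

noncomputable def Qgen (n M : ℕ) (lam : Fin n → ℝ) (mu : ℝ)
    (x y : Fin n → Fin (M+1)) : ℝ :=
  if x = y then -∑ z ∈ Finset.univ.erase x, Qoff n M lam mu x z
  else Qoff n M lam mu x y

noncomputable def QbarOff (M : ℕ) (lam mu : ℝ) (a b : Fin (M+1)) : ℝ :=
  (if (b : ℕ) = (a : ℕ) + 1 then lam else 0) + (if b = 0 ∧ a ≠ 0 then mu else 0)

noncomputable def Qbar (M : ℕ) (lam mu : ℝ) (a b : Fin (M+1)) : ℝ :=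
  if a = b then -∑ c ∈ Finset.univ.erase a, QbarOff M lam mu a c
  else QbarOff M lam mu a b

noncomputable def Pmat (n M : ℕ) (lam : Fin n → ℝ) (mu qhat : ℝ) :
    Matrix (Fin n → Fin (M+1)) (Fin n → Fin (M+1)) ℝ :=
  1 + qhat⁻¹ • Matrix.of (Qgen n M lam mu)

noncomputable def PbarMat (M : ℕ) (lam mu qhat : ℝ) :
    Matrix (Fin (M+1)) (Fin (M+1)) ℝ :=
  1 + qhat⁻¹ • Matrix.of (Qbar M lam mu)

noncomputable def delta0 (n M : ℕ) : (Fin n → Fin (M+1)) → ℝ :=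
  fun x => if x = (fun _ => 0) then 1 else 0

noncomputable def delta0bar (M : ℕ) : Fin (M+1) → ℝ :=
  fun a => if a = 0 then 1 else 0

noncomputable def transientP (n M : ℕ) (lam : Fin n → ℝ) (mu qhat t : ℝ)
    (x : Fin n → Fin (M+1)) : ℝ :=
  ∑' k : ℕ, Real.exp (-(qhat * t)) * (qhat * t) ^ k / (Nat.factorial k) *
    Matrix.vecMul (delta0 n M) ((Pmat n M lam mu qhat) ^ k) x

noncomputable def transientPbar (M : ℕ) (lam mu qhat t : ℝ) (a : Fin (M+1)) : ℝ :=
  ∑' k : ℕ, Real.exp (-(qhat * t)) * (qhat * t) ^ k / (Nat.factorial k) *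
    Matrix.vecMul (delta0bar M) ((PbarMat M lam mu qhat) ^ k) a


section Aux
variable (n M : ℕ) (lam : Fin n → ℝ) (mu : ℝ)

def predAt (j : Fin n) (y : Fin n → Fin (M+1)) : Fin n → Fin (M+1) :=
  fun k => if k = j then ⟨(y j : ℕ) - 1, lt_of_le_of_lt (Nat.sub_le _ _) (y j).isLt⟩ else y k

lemma sum_predAt_lt (j : Fin n) (y : Fin n → Fin (M+1)) (hj : (y j : ℕ) ≠ 0) :
    ∑ k, ((predAt n M j y) k : ℕ) < ∑ k, (y k : ℕ) := by
  refine Finset.sum_lt_sum (fun k _ => ?_) ⟨j, Finset.mem_univ j, ?_⟩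
  · unfold predAt; by_cases h : k = j
    · simp only [h, if_pos rfl]; exact Nat.sub_le _ _
    · simp [h]
  · unfold predAt; simp only [if_pos rfl]; show (y j : ℕ) - 1 < (y j : ℕ); omega

noncomputable def qout (y : Fin n → Fin (M+1)) : ℝ :=
  ∑ z ∈ Finset.univ.erase y, Qoff n M lam mu y z

noncomputable def fstat (y : Fin n → Fin (M+1)) : ℝ :=
  if y = (fun _ => 0) then 1 else
    (∑ j ∈ (Finset.univ.filter (fun j : Fin n => (y j : ℕ) ≠ 0)).attach,
        lam j.1 * fstat (predAt n M j.1 y)) / qout n M lam mu y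
termination_by ∑ k, (y k : ℕ)
decreasing_by
  exact sum_predAt_lt n M j.1 y (by have := j.2; simp only [Finset.mem_filter] at this; exact this.2)

end Aux

section Lem
variable (n M : ℕ) (lam : Fin n → ℝ) (mu : ℝ)

lemma Qoff_nonneg (hlam : ∀ j, 0 < lam j) (hmu : 0 < mu)
    (x y : Fin n → Fin (M+1)) : 0 ≤ Qoff n M lam mu x y := by
  unfold Qoff
  apply add_nonneg
  · apply Finset.sum_nonneg
    intro j _
    split <;> [exact (hlam j).le; rfl]
  · split <;> [exact hmu.le; rfl]

lemma qout_nonneg (hlam : ∀ j, 0 < lam j) (hmu : 0 < mu)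
    (y : Fin n → Fin (M+1)) : 0 ≤ qout n M lam mu y :=
  Finset.sum_nonneg fun z _ => Qoff_nonneg n M lam mu hlam hmu y z

lemma Qoff_to_zero (hlam : ∀ j, 0 < lam j)
    (x : Fin n → Fin (M+1)) (hx : x ≠ (fun _ => 0)) :
    mu ≤ Qoff n M lam mu x (fun _ => 0) := by
  unfold Qoff
  have h1 : (0:ℝ) ≤ ∑ j : Fin n,
      if ((fun _ => (0 : Fin (M+1))) j : ℕ) = (x j : ℕ) + 1 ∧
        (∀ k, k ≠ j → (fun _ => (0:Fin (M+1))) k = x k) then lam j else 0 := by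
    apply Finset.sum_nonneg; intro j _; split <;> [exact (hlam j).le; rfl]
  rw [if_pos ⟨rfl, hx⟩]
  linarith

lemma qout_pos (hlam : ∀ j, 0 < lam j) (hmu : 0 < mu)
    (y : Fin n → Fin (M+1)) (hy : y ≠ (fun _ => 0)) :
    0 < qout n M lam mu y := by
  unfold qout
  have hmem : (fun _ => (0:Fin (M+1))) ∈ Finset.univ.erase y :=
    Finset.mem_erase.2 ⟨Ne.symm hy, Finset.mem_univ _⟩
  calc (0:ℝ) < mu := hmu
    _ ≤ Qoff n M lam mu y (fun _ => 0) := Qoff_to_zero n M lam mu hlam y hy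
    _ ≤ _ := Finset.single_le_sum
        (fun z _ => Qoff_nonneg n M lam mu hlam hmu y z) hmem

lemma fstat_nonneg (hlam : ∀ j, 0 < lam j) (hmu : 0 < mu)
    (y : Fin n → Fin (M+1)) : 0 ≤ fstat n M lam mu y := by
  have key : ∀ s : ℕ, ∀ y : Fin n → Fin (M+1), (∑ k, (y k : ℕ)) = s →
      0 ≤ fstat n M lam mu y := by
    intro s
    induction s using Nat.strong_induction_on with
    | _ s ih =>
      intro y hy
      rw [fstat]
      split
      · exact zero_le_one
      · apply div_nonneg _ (qout_nonneg n M lam mu hlam hmu y)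
        apply Finset.sum_nonneg
        intro j _
        apply mul_nonneg (hlam j.1).le
        have hj : (y j.1 : ℕ) ≠ 0 := by
          have := j.2; simp only [Finset.mem_filter] at this; exact this.2
        exact ih _ (hy ▸ sum_predAt_lt n M j.1 y hj) _ rfl
  exact key _ y rfl

lemma Qgen_rowsum (x : Fin n → Fin (M+1)) : ∑ y, Qgen n M lam mu x y = 0 := by
  rw [← Finset.add_sum_erase Finset.univ _ (Finset.mem_univ x)]
  have h1 : Qgen n M lam mu x x = -qout n M lam mu x := by
    unfold Qgen qout; simp
  have h2 : ∑ y ∈ Finset.univ.erase x, Qgen n M lam mu x y = qout n M lam mu x := by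
    apply Finset.sum_congr rfl
    intro y hy
    unfold Qgen
    rw [if_neg (Ne.symm (Finset.mem_erase.1 hy).1)]
  rw [h1, h2]; ring

end Lem

section Bal
variable (n M : ℕ) (lam : Fin n → ℝ) (mu : ℝ)

lemma predAt_spec (j : Fin n) (y x : Fin n → Fin (M+1)) (hj : (y j : ℕ) ≠ 0) :
    ((y j : ℕ) = (x j : ℕ) + 1 ∧ (∀ k, k ≠ j → y k = x k)) ↔ x = predAt n M j y := by
  constructor
  · rintro ⟨h1, h2⟩
    funext k
    by_cases hk : k = j
    · subst hk
      apply Fin.ext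
      simp [predAt]
      omega
    · rw [← h2 k hk]
      simp [predAt, hk]
  · rintro rfl
    constructor
    · simp [predAt]; omega
    · intro k hk; simp [predAt, hk]

lemma predAt_ne (j : Fin n) (y : Fin n → Fin (M+1)) (hj : (y j : ℕ) ≠ 0) :
    predAt n M j y ≠ y := by
  intro h
  have := congrFun h j
  simp [predAt] at this
  have := congrArg Fin.val this
  simp at this
  omega

lemma fstat_balance (hlam : ∀ j, 0 < lam j) (hmu : 0 < mu)
    (y : Fin n → Fin (M+1)) (hy : y ≠ (fun _ => 0)) :
    ∑ x, fstat n M lam mu x * Qgen n M lam mu x y = 0 := by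
  rw [← Finset.add_sum_erase Finset.univ _ (Finset.mem_univ y)]
  have hd : fstat n M lam mu y * Qgen n M lam mu y y
      = -(fstat n M lam mu y * qout n M lam mu y) := by
    unfold Qgen qout; simp; ring
  have hoff : ∑ x ∈ Finset.univ.erase y, fstat n M lam mu x * Qgen n M lam mu x y
      = fstat n M lam mu y * qout n M lam mu y := by
    have step1 : ∀ x ∈ Finset.univ.erase y,
        fstat n M lam mu x * Qgen n M lam mu x y
        = ∑ j : Fin n, (if (y j : ℕ) = (x j : ℕ) + 1 ∧ (∀ k, k ≠ j → y k = x k)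
            then fstat n M lam mu x * lam j else 0) := by
      intro x hx
      have hxy : x ≠ y := (Finset.mem_erase.1 hx).1
      unfold Qgen Qoff
      rw [if_neg hxy, if_neg (by simp [hy])]
      rw [add_zero, Finset.mul_sum]
      exact Finset.sum_congr rfl fun j _ => (mul_ite _ _ _ _).trans (by rw [mul_zero])
    rw [Finset.sum_congr rfl step1, Finset.sum_comm]
    have step2 : ∀ j : Fin n,
        (∑ x ∈ Finset.univ.erase y, if (y j : ℕ) = (x j : ℕ) + 1 ∧ (∀ k, k ≠ j → y k = x k)
            then fstat n M lam mu x * lam j else 0)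
        = (if (y j : ℕ) ≠ 0 then fstat n M lam mu (predAt n M j y) * lam j else 0) := by
      intro j
      by_cases hj : (y j : ℕ) = 0
      · rw [if_neg (by simpa using hj)]
        apply Finset.sum_eq_zero
        intro x _
        rw [if_neg]
        rintro ⟨h1, -⟩
        omega
      · rw [if_pos hj]
        have hc : ∀ x : Fin n → Fin (M+1),
            ((y j : ℕ) = (x j : ℕ) + 1 ∧ (∀ k, k ≠ j → y k = x k)) ↔ x = predAt n M j y :=
          fun x => predAt_spec n M j y x hj
        calc (∑ x ∈ Finset.univ.erase y, if (y j : ℕ) = (x j : ℕ) + 1 ∧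
                (∀ k, k ≠ j → y k = x k) then fstat n M lam mu x * lam j else 0)
            = ∑ x ∈ Finset.univ.erase y, if x = predAt n M j y
                then fstat n M lam mu x * lam j else 0 :=
              Finset.sum_congr rfl fun x _ => by rw [if_congr (hc x) rfl rfl]
          _ = fstat n M lam mu (predAt n M j y) * lam j := by
              rw [Finset.sum_ite_eq' (Finset.univ.erase y)]
              rw [if_pos (Finset.mem_erase.2 ⟨predAt_ne n M j y hj, Finset.mem_univ _⟩)]
    rw [Finset.sum_congr rfl (fun j _ => step2 j)]
    -- now: ∑ j, ite ((y j:ℕ) ≠ 0) (fstat(pred)*lam j) 0 = fstat y * qout y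
    rw [← Finset.sum_filter]
    have hq : qout n M lam mu y ≠ 0 :=
      (qout_pos n M lam mu hlam hmu y hy).ne'
    have hf : fstat n M lam mu y
        = (∑ j ∈ (Finset.univ.filter (fun j : Fin n => (y j : ℕ) ≠ 0)).attach,
            lam j.1 * fstat n M lam mu (predAt n M j.1 y)) / qout n M lam mu y := by
      rw [fstat, if_neg hy]
    rw [hf, div_mul_cancel₀ _ hq, ← Finset.sum_attach
      (Finset.univ.filter (fun j : Fin n => (y j : ℕ) ≠ 0))
      (fun j => fstat n M lam mu (predAt n M j y) * lam j)]
    exact Finset.sum_congr rfl fun j _ => mul_comm _ _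
  rw [hd, hoff]; ring

end Bal

section Final
variable (n M : ℕ) (lam : Fin n → ℝ) (mu : ℝ)

lemma fstat_balance_zero (hlam : ∀ j, 0 < lam j) (hmu : 0 < mu) :
    ∑ x, fstat n M lam mu x * Qgen n M lam mu x (fun _ => 0) = 0 := by
  have htot : ∑ y : Fin n → Fin (M+1), ∑ x, fstat n M lam mu x * Qgen n M lam mu x y = 0 := by
    rw [Finset.sum_comm]
    apply Finset.sum_eq_zero
    intro x _
    rw [← Finset.mul_sum, Qgen_rowsum, mul_zero]
  rw [← Finset.add_sum_erase Finset.univ _ (Finset.mem_univ (fun _ => (0:Fin (M+1))))] at htot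
  rw [Finset.sum_eq_zero (fun y hy => fstat_balance n M lam mu hlam hmu y
      (Finset.mem_erase.1 hy).1), add_zero] at htot
  exact htot

lemma Pmat_apply (qhat : ℝ) (x y : Fin n → Fin (M+1)) :
    Pmat n M lam mu qhat x y
      = (if x = y then (1:ℝ) else 0) + qhat⁻¹ * Qgen n M lam mu x y := by
  simp [Pmat, Matrix.add_apply, Matrix.one_apply, Matrix.smul_apply]

lemma Pmat_nonneg (hlam : ∀ j, 0 < lam j) (hmu : 0 < mu) (qhat : ℝ) (hq : 0 < qhat)
    (hqbound : ∀ x : Fin n → Fin (M+1), -(Qgen n M lam mu x x) ≤ qhat)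
    (x y : Fin n → Fin (M+1)) : 0 ≤ Pmat n M lam mu qhat x y := by
  rw [Pmat_apply]
  by_cases h : x = y
  · subst h
    rw [if_pos rfl]
    have h1 : -qhat ≤ Qgen n M lam mu x x := by linarith [hqbound x]
    have h2 : qhat⁻¹ * (-qhat) ≤ qhat⁻¹ * Qgen n M lam mu x x :=
      mul_le_mul_of_nonneg_left h1 (inv_nonneg.2 hq.le)
    have h3 : qhat⁻¹ * (-qhat) = -1 := by field_simp
    linarith
  · rw [if_neg h, zero_add]
    apply mul_nonneg (inv_nonneg.2 hq.le)
    unfold Qgen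
    rw [if_neg h]
    exact Qoff_nonneg n M lam mu hlam hmu x y

lemma Ppow_nonneg (hlam : ∀ j, 0 < lam j) (hmu : 0 < mu) (qhat : ℝ) (hq : 0 < qhat)
    (hqbound : ∀ x : Fin n → Fin (M+1), -(Qgen n M lam mu x x) ≤ qhat)
    (k : ℕ) (x y : Fin n → Fin (M+1)) : 0 ≤ ((Pmat n M lam mu qhat) ^ k) x y := by
  induction k generalizing x y with
  | zero =>
    rw [pow_zero, Matrix.one_apply]
    split <;> norm_num
  | succ k ih =>
    rw [pow_succ, Matrix.mul_apply]
    exact Finset.sum_nonneg fun z _ =>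
      mul_nonneg (ih x z) (Pmat_nonneg n M lam mu hlam hmu qhat hq hqbound z y)

lemma Ppow_mul_pos (hlam : ∀ j, 0 < lam j) (hmu : 0 < mu) (qhat : ℝ) (hq : 0 < qhat)
    (hqbound : ∀ x : Fin n → Fin (M+1), -(Qgen n M lam mu x x) ≤ qhat)
    (k l : ℕ) (x z y : Fin n → Fin (M+1))
    (h1 : 0 < ((Pmat n M lam mu qhat) ^ k) x z)
    (h2 : 0 < ((Pmat n M lam mu qhat) ^ l) z y) :
    0 < ((Pmat n M lam mu qhat) ^ (k + l)) x y := by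
  rw [pow_add, Matrix.mul_apply]
  apply Finset.sum_pos'
  · intro w _
    exact mul_nonneg (Ppow_nonneg n M lam mu hlam hmu qhat hq hqbound k x w)
      (Ppow_nonneg n M lam mu hlam hmu qhat hq hqbound l w y)
  · exact ⟨z, Finset.mem_univ z, mul_pos h1 h2⟩

lemma Pmat_pred_pos (hlam : ∀ j, 0 < lam j) (hmu : 0 < mu) (qhat : ℝ) (hq : 0 < qhat)
    (j : Fin n) (y : Fin n → Fin (M+1)) (hj : (y j : ℕ) ≠ 0) :
    0 < Pmat n M lam mu qhat (predAt n M j y) y := by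
  rw [Pmat_apply, if_neg (predAt_ne n M j y hj), zero_add]
  apply mul_pos (inv_pos.2 hq)
  unfold Qgen
  rw [if_neg (predAt_ne n M j y hj)]
  unfold Qoff
  have hcond : (y j : ℕ) = ((predAt n M j y) j : ℕ) + 1 ∧
      (∀ k, k ≠ j → y k = (predAt n M j y) k) := (predAt_spec n M j y _ hj).2 rfl
  have h1 : lam j ≤ ∑ i : Fin n,
      if (y i : ℕ) = ((predAt n M j y) i : ℕ) + 1 ∧ (∀ k, k ≠ i → y k = (predAt n M j y) k)
      then lam i else 0 := by
    have := Finset.single_le_sum (f := fun i : Fin n =>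
      if (y i : ℕ) = ((predAt n M j y) i : ℕ) + 1 ∧ (∀ k, k ≠ i → y k = (predAt n M j y) k)
      then lam i else 0) (fun i _ => by split <;> [exact (hlam i).le; rfl]) (Finset.mem_univ j)
    simp only [if_pos hcond] at this
    exact this
  have h2 : (0:ℝ) ≤ if y = (fun _ => 0) ∧ predAt n M j y ≠ (fun _ => 0) then mu else 0 := by
    split <;> [exact hmu.le; rfl]
  linarith [hlam j]

lemma Ppow_zero_to (hlam : ∀ j, 0 < lam j) (hmu : 0 < mu) (qhat : ℝ) (hq : 0 < qhat)
    (hqbound : ∀ x : Fin n → Fin (M+1), -(Qgen n M lam mu x x) ≤ qhat)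
    (y : Fin n → Fin (M+1)) :
    0 < ((Pmat n M lam mu qhat) ^ (∑ k, (y k : ℕ))) (fun _ => 0) y := by
  have key : ∀ s : ℕ, ∀ y : Fin n → Fin (M+1), (∑ k, (y k : ℕ)) = s →
      0 < ((Pmat n M lam mu qhat) ^ s) (fun _ => 0) y := by
    intro s
    induction s using Nat.strong_induction_on with
    | _ s ih =>
      intro y hy
      rcases Nat.eq_zero_or_pos s with hs | hs
      · subst hs
        have hy0 : y = (fun _ => 0) := by
          funext k
          have : (y k : ℕ) = 0 := by
            have := Finset.sum_eq_zero_iff.1 hy k (Finset.mem_univ k)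
            exact this
          exact Fin.ext this
        subst hy0
        rw [pow_zero, Matrix.one_apply_eq]
        norm_num
      · obtain ⟨s', rfl⟩ : ∃ s', s = s' + 1 := ⟨s - 1, by omega⟩
        have hex : ∃ j, (y j : ℕ) ≠ 0 := by
          by_contra h
          push_neg at h
          have : (∑ k, (y k : ℕ)) = 0 := Finset.sum_eq_zero fun k _ => h k
          omega
        obtain ⟨j, hj⟩ := hex
        have hsum : ∑ k, ((predAt n M j y) k : ℕ) = s' := by
          have h1 : ∑ k, ((predAt n M j y) k : ℕ) + 1 = ∑ k, (y k : ℕ) := by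
            rw [← Finset.add_sum_erase Finset.univ (fun k => ((predAt n M j y) k : ℕ))
                (Finset.mem_univ j),
              ← Finset.add_sum_erase Finset.univ (fun k => ((y k : ℕ)))
                (Finset.mem_univ j)]
            have he : ∑ k ∈ Finset.univ.erase j, ((predAt n M j y) k : ℕ)
                = ∑ k ∈ Finset.univ.erase j, ((y k : ℕ)) := by
              apply Finset.sum_congr rfl
              intro k hk
              simp [predAt, (Finset.mem_erase.1 hk).1]
            rw [he]
            have : ((predAt n M j y) j : ℕ) = (y j : ℕ) - 1 := by simp [predAt]
            omega
          omega
        have hstep := Pmat_pred_pos n M lam mu hlam hmu qhat hq j y hj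
        have hIH := ih s' (by omega) (predAt n M j y) hsum
        have := Ppow_mul_pos n M lam mu hlam hmu qhat hq hqbound s' 1
          (fun _ => 0) (predAt n M j y) y hIH (by rwa [pow_one])
        exact this
  exact key _ y rfl

lemma Pmat_to_zero_pos (hlam : ∀ j, 0 < lam j) (hmu : 0 < mu) (qhat : ℝ) (hq : 0 < qhat)
    (x : Fin n → Fin (M+1)) (hx : x ≠ (fun _ => 0)) :
    0 < Pmat n M lam mu qhat x (fun _ => 0) := by
  rw [Pmat_apply, if_neg hx, zero_add]
  apply mul_pos (inv_pos.2 hq)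
  unfold Qgen
  rw [if_neg hx]
  exact lt_of_lt_of_le hmu (Qoff_to_zero n M lam mu hlam x hx)

end Final

/-- (i) The uniformized chain `P = I + Q/q̂` of the OEF CTMC is
irreducible, and (ii) the OEF CTMC admits a stationary distribution. -/
theorem oef_ctmc_irreducible_and_stationary (n M : ℕ) (hn : 1 ≤ n) (hM : 1 ≤ M)
    (lam : Fin n → ℝ) (hlam : ∀ j, 0 < lam j) (mu : ℝ) (hmu : 0 < mu)
    (qhat : ℝ) (hq : 0 < qhat)
    (hqbound : ∀ x : Fin n → Fin (M+1), -(Qgen n M lam mu x x) ≤ qhat) :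
    (∀ x y : Fin n → Fin (M+1), ∃ k : ℕ, 0 < ((Pmat n M lam mu qhat) ^ k) x y)
    ∧
    (∃ Pi : (Fin n → Fin (M+1)) → ℝ,
      (∀ x, 0 ≤ Pi x) ∧ (∑ x, Pi x = 1) ∧
      (∀ y, ∑ x, Pi x * Qgen n M lam mu x y = 0)) := by
  constructor
  · intro x y
    by_cases hx : x = (fun _ => 0)
    · subst hx
      exact ⟨∑ k, (y k : ℕ), Ppow_zero_to n M lam mu hlam hmu qhat hq hqbound y⟩
    · refine ⟨1 + ∑ k, (y k : ℕ), ?_⟩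
      exact Ppow_mul_pos n M lam mu hlam hmu qhat hq hqbound 1 (∑ k, (y k : ℕ))
        x (fun _ => 0) y
        (by rw [pow_one]; exact Pmat_to_zero_pos n M lam mu hlam hmu qhat hq x hx)
        (Ppow_zero_to n M lam mu hlam hmu qhat hq hqbound y)
  · set S := ∑ x, fstat n M lam mu x with hS
    have hS1 : (1:ℝ) ≤ S := by
      have h0 : fstat n M lam mu (fun _ => 0) = 1 := by rw [fstat, if_pos rfl]
      calc (1:ℝ) = fstat n M lam mu (fun _ => 0) := h0.symm
        _ ≤ S := Finset.single_le_sum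
            (fun z _ => fstat_nonneg n M lam mu hlam hmu z) (Finset.mem_univ _)
    have hSpos : 0 < S := lt_of_lt_of_le one_pos hS1
    refine ⟨fun x => fstat n M lam mu x / S, ?_, ?_, ?_⟩
    · intro x
      exact div_nonneg (fstat_nonneg n M lam mu hlam hmu x) hSpos.le
    · rw [← Finset.sum_div, ← hS, div_self hSpos.ne']
    · intro y
      have hb : ∑ x, fstat n M lam mu x * Qgen n M lam mu x y = 0 := by
        by_cases hy : y = (fun _ => 0)
        · subst hy; exact fstat_balance_zero n M lam mu hlam hmu
        · exact fstat_balance n M lam mu hlam hmu y hy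
      calc ∑ x, fstat n M lam mu x / S * Qgen n M lam mu x y
          = (∑ x, fstat n M lam mu x * Qgen n M lam mu x y) / S := by
            rw [Finset.sum_div]
            exact Finset.sum_congr rfl fun x _ => by ring
        _ = 0 := by rw [hb, zero_div]
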